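/- For all integers q ≥ 2 and n ≥ 1, the family 𝓔_q is n-cell implementable under scenario (◦∗) if and only if q ≤ 2^n, and likewise 𝓔_q is n-cell implementable under scenario (∗∗) if and only if q ≤ 2^n. -/

import Mathlib

/-- The alphabet 𝔹• = {0, 1, ∗, •}. -/
inductive BB : Type
  | zero
  | one
  | star
  | reject
deriving DecidableEq

instance instFintypeBB : Fintype BB :=
  ⟨{BB.zero, BB.one, BB.star, BB.reject}, fun x => by cases x <;> simp⟩

/-- The cell function T : 𝔹• × 𝔹• → 𝔹: T(u,ϑ) = 1 iff u = ∗, or ϑ = ∗,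
or u,ϑ ∈ 𝔹 with u = ϑ. -/
def Tcell : BB → BB → Bool
  | BB.star, _ => true
  | _, BB.star => true
  | BB.zero, BB.zero => true
  | BB.one, BB.one => true
  | _, _ => false

/-- The word-level function T(u,ϑ) = ⋀_{j<n} T(u_j, ϑ_j). -/
def Tword {n : ℕ} (u θ : Fin n → BB) : Bool :=
  decide (∀ j, Tcell (u j) (θ j) = true)

/-- The alphabet 𝔹 = {0,1} ⊆ 𝔹•. -/
def Bcirc : Set BB := {BB.zero, BB.one}

/-- The alphabet 𝔹∗ = {0,1,∗} ⊆ 𝔹•. -/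
def Bstar : Set BB := {BB.zero, BB.one, BB.star}

/-- The full alphabet 𝔹•. -/
def Bdot : Set BB := Set.univ

/-- A family Φ of functions {0,…,q−1} → 𝔹 is n-cell implementable under
scenario (A,B) if there are mappings u : {0,…,q−1} → A^n and ϑ : Φ → B^n
with f(x) = T(u(x), ϑ(f)) for all f ∈ Φ and x. -/
def Implementable (A B : Set BB) (n q : ℕ) (Φ : Set (Fin q → Bool)) : Prop :=
  ∃ u : Fin q → Fin n → BB, ∃ θ : (Fin q → Bool) → Fin n → BB,
    (∀ x j, u x j ∈ A) ∧ (∀ f ∈ Φ, ∀ j, θ f j ∈ B) ∧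
    (∀ f ∈ Φ, ∀ x, f x = Tword (u x) (θ f))

/-- The family 𝓔_q = { x ↦ [x = t] : t ∈ [q⟩ }. -/
def Eset (q : ℕ) : Set (Fin q → Bool) :=
  { f | ∃ t : Fin q, f = fun x => decide (x = t) }

/-- The family 𝓝_q = { x ↦ [x ≠ t] : t ∈ [q⟩ }. -/
def Nset (q : ℕ) : Set (Fin q → Bool) :=
  { f | ∃ t : Fin q, f = fun x => decide (x ≠ t) }

/-- The family 𝓖_q = { x ↦ [x ≥ t] : t ∈ [q⟩ }. -/
def Gset (q : ℕ) : Set (Fin q → Bool) :=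
  { f | ∃ t : Fin q, f = fun x => decide (t ≤ x) }

/-- The family 𝓛_q = { x ↦ [x ≤ t] : t ∈ [q⟩ }. -/
def Lset (q : ℕ) : Set (Fin q → Bool) :=
  { f | ∃ t : Fin q, f = fun x => decide (x ≤ t) }

/-- encoding of a number as a word of bits -/
def enc (q n : ℕ) (x : Fin q) : Fin n → BB :=
  fun j => if Nat.testBit x.val j.val then BB.one else BB.zero

lemma Tcell_enc (q n : ℕ) (x y : Fin q) (j : Fin n) :
    Tcell (enc q n x j) (enc q n y j) = true ↔
      Nat.testBit x.val j.val = Nat.testBit y.val j.val := by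
  unfold enc
  rcases Bool.eq_false_or_eq_true (Nat.testBit x.val j.val) with h1 | h1 <;>
  rcases Bool.eq_false_or_eq_true (Nat.testBit y.val j.val) with h2 | h2 <;>
    simp [h1, h2, Tcell]

lemma enc_inj (q n : ℕ) (hqn : q ≤ 2 ^ n) (x y : Fin q)
    (h : ∀ j : Fin n, Nat.testBit x.val j.val = Nat.testBit y.val j.val) : x = y := by
  apply Fin.ext
  apply Nat.eq_of_testBit_eq
  intro i
  by_cases hi : i < n
  · exact h ⟨i, hi⟩
  · rw [Nat.testBit_eq_false_of_lt, Nat.testBit_eq_false_of_lt]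
    · exact lt_of_lt_of_le (lt_of_lt_of_le y.isLt hqn) (Nat.pow_le_pow_right (by norm_num) (le_of_not_gt hi))
    · exact lt_of_lt_of_le (lt_of_lt_of_le x.isLt hqn) (Nat.pow_le_pow_right (by norm_num) (le_of_not_gt hi))

lemma backward (q n : ℕ) (hqn : q ≤ 2 ^ n) :
    Implementable Bcirc Bstar n q (Eset q) := by
  classical
  refine ⟨enc q n, fun f => if h : f ∈ Eset q then enc q n h.choose else fun _ => BB.zero,
    ?_, ?_, ?_⟩
  · intro x j
    unfold enc
    by_cases h : Nat.testBit x.val j.val <;> simp [h, Bcirc]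
  · intro f hf j
    simp only [dif_pos hf]
    unfold enc
    by_cases h : Nat.testBit hf.choose.val j.val <;> simp [h, Bstar]
  · intro f hf x
    obtain ⟨t', hspec⟩ := id hf
    have hch : hf.choose = t' := by
      have h1 := hf.choose_spec
      have := congrFun (h1.symm.trans hspec) hf.choose
      simpa using this
    simp only [dif_pos hf, hch]
    rw [hspec]
    unfold Tword
    rcases eq_or_ne x t' with h | h
    · subst h
      have : ∀ j : Fin n, Tcell (enc q n x j) (enc q n x j) = true :=
        fun j => (Tcell_enc q n x x j).mpr rfl
      simp [this]
    · have : ¬ ∀ j : Fin n, Tcell (enc q n x j) (enc q n t' j) = true := by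
        intro hall
        exact h (enc_inj q n hqn x t' (fun j => (Tcell_enc q n x t' j).mp (hall j)))
      simp [h, this]

lemma forward (q n : ℕ) (h : Implementable Bstar Bstar n q (Eset q)) : q ≤ 2 ^ n := by
  classical
  obtain ⟨u, θ, hu, hθ, himp⟩ := h
  set v : Fin q → Fin n → Bool := fun t j =>
    match u t j with
    | BB.zero => false
    | BB.one => true
    | _ => θ (fun x => decide (x = t)) j = BB.one
  have hv : Function.Injective v := by
    intro t s hts
    by_contra hne
    have hmem : (fun x => decide (x = s)) ∈ Eset q := ⟨s, rfl⟩
    have h1 : (false : Bool) = Tword (u t) (θ fun x => decide (x = s)) := by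
      have := himp _ hmem t
      simpa [hne] using this
    have h2 : (true : Bool) = Tword (u s) (θ fun x => decide (x = s)) := by
      have := himp _ hmem s
      simpa using this
    unfold Tword at h1 h2
    have h2' : ∀ j, Tcell (u s j) (θ (fun x => decide (x = s)) j) = true := of_decide_eq_true h2.symm
    have h1' : ∃ j, ¬ Tcell (u t j) (θ (fun x => decide (x = s)) j) = true := by
      by_contra hall
      push_neg at hall
      rw [decide_eq_true hall] at h1
      exact Bool.false_ne_true h1
    obtain ⟨j, hj⟩ := h1'
    have h2j := h2' j
    have hvj : v t j = v s j := congrFun hts j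
    have hut := hu t j
    have hus := hu s j
    have hθj := hθ _ hmem j
    simp only [Bstar, Set.mem_insert_iff, Set.mem_singleton_iff] at hut hus hθj
    simp only [v] at hvj
    rcases hut with h' | h' | h' <;>
      rcases hθj with h'' | h'' | h'' <;>
      rcases hus with h3 | h3 | h3 <;>
      rw [h', h3] at hvj <;>
      rw [h', h''] at hj <;>
      rw [h3, h''] at h2j <;>
      simp [Tcell, h''] at hj h2j hvj ⊢
  calc q = Fintype.card (Fin q) := (Fintype.card_fin q).symm
    _ ≤ Fintype.card (Fin n → Bool) := Fintype.card_le_of_injective v hv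
    _ = 2 ^ n := by simp

lemma mono_circ (q n : ℕ) (h : Implementable Bcirc Bstar n q (Eset q)) :
    Implementable Bstar Bstar n q (Eset q) := by
  obtain ⟨u, θ, hu, hθ, himp⟩ := h
  exact ⟨u, θ, fun x j => by
    have := hu x j
    simp only [Bcirc, Bstar, Set.mem_insert_iff, Set.mem_singleton_iff] at this ⊢
    tauto, hθ, himp⟩

theorem Eset_implementable_circStar_and_starStar (q n : ℕ) (hq : 2 ≤ q) (hn : 1 ≤ n) :
    (Implementable Bcirc Bstar n q (Eset q) ↔ q ≤ 2 ^ n) ∧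
    (Implementable Bstar Bstar n q (Eset q) ↔ q ≤ 2 ^ n) :=
  ⟨⟨fun h => forward q n (mono_circ q n h), backward q n⟩,
   ⟨forward q n, fun h => mono_circ q n (backward q n h)⟩⟩
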